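/- The polynomial f(x,y,z) = x + (y−z)² cannot be written in the form p(k(x) + l(y) + m(z)) for nonconstant polynomials p, k, l, m ∈ ℝ[t]. -/

import Mathlib

open MvPolynomial

/-- The polynomial `f(x,y,z) = x + (y - z)²` cannot be written as
`p(k(x) + l(y) + m(z))` with `p, k, l, m` nonconstant univariate real polynomials. -/
theorem stmt_10 :
    ¬ ∃ p k l m : Polynomial ℝ,
      0 < p.natDegree ∧ 0 < k.natDegree ∧ 0 < l.natDegree ∧ 0 < m.natDegree ∧
      (X 0 + (X 1 - X 2) ^ 2 : MvPolynomial (Fin 3) ℝ) =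
        Polynomial.aeval
          ((Polynomial.aeval (X 0 : MvPolynomial (Fin 3) ℝ) k) +
           (Polynomial.aeval (X 1 : MvPolynomial (Fin 3) ℝ) l) +
           (Polynomial.aeval (X 2 : MvPolynomial (Fin 3) ℝ) m)) p := by
  rintro ⟨p, k, l, m, hp, hk, hl, hm, heq⟩
  -- Functional identity on ℝ³
  have H : ∀ a b c : ℝ, a + (b - c) ^ 2 =
      p.eval (k.eval a + l.eval b + m.eval c) := by
    intro a b c
    have := congrArg (MvPolynomial.aeval (![a, b, c] : Fin 3 → ℝ)) heq
    have e : ∀ (i : Fin 3) (q : Polynomial ℝ), MvPolynomial.eval ![a, b, c] (Polynomial.aeval (X i) q) = q.eval (![a, b, c] i) := by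
      intro i q
      change MvPolynomial.aeval _ _ = _
      rw [← Polynomial.aeval_algHom_apply]
      simp
    simpa [← Polynomial.aeval_algHom_apply, e] using this
  -- p ∘ (k + const) = X as polynomials
  set c₀ : ℝ := l.eval 0 + m.eval 0 with hc₀
  have hcomp : (Polynomial.X : Polynomial ℝ) = p.comp (k + Polynomial.C c₀) := by
    apply Polynomial.funext
    intro a
    have h := H a 0 0
    norm_num at h
    simp [Polynomial.eval_comp, hc₀, ← add_assoc]
    linarith
  -- degrees: p.natDegree * k.natDegree = 1
  have hdeg : p.natDegree * k.natDegree = 1 := by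
    have h1 : (Polynomial.X : Polynomial ℝ).natDegree = 1 := Polynomial.natDegree_X
    rw [hcomp, Polynomial.natDegree_comp, Polynomial.natDegree_add_C] at h1
    exact h1
  have hp1 : p.natDegree = 1 := Nat.dvd_one.mp ⟨k.natDegree, hdeg.symm⟩
  -- p is linear as a function
  have hval : ∀ t : ℝ, p.eval t = p.coeff 0 + p.coeff 1 * t := by
    intro t
    rw [Polynomial.eval_eq_sum_range, hp1]
    simp [Finset.sum_range_succ]
    try ring
  -- rectangle trick
  have h1 := H 0 1 1
  have h2 := H 0 0 0
  have h3 := H 0 1 0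
  have h4 := H 0 0 1
  rw [hval] at h1 h2 h3 h4
  have : (0 : ℝ) = -2 := by linarith
  norm_num at this
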